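/- Let G be a graph and H : V(G) → 2^ℕ such that for every vertex v, H(v) is either the set of all even integers in [0, 2⌈d_G(v)/2⌉] or the set of all odd integers in [1, 2⌈d_G(v)/2⌉ − 1]. If |{v ∈ V(G) : H(v) consists of odd integers}| ≡ e(G) (mod 2), then G admits an H-orientation. -/

import Mathlib

/-- An orientation of a graph: each edge is assigned a source endpoint. -/
structure GOrientation {V : Type*} (G : SimpleGraph V) where
  src : Sym2 V → V
  mem : ∀ e ∈ G.edgeSet, src e ∈ e

/-- Out-degree of `v` under orientation `O`: number of edges whose source is `v`. -/
noncomputable def outDeg {V : Type*} {G : SimpleGraph V} (O : GOrientation G) (v : V) : ℕ :=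
  Set.ncard {e ∈ G.edgeSet | O.src e = v}

/-- Degree of a vertex. -/
noncomputable def deg {V : Type*} (G : SimpleGraph V) (v : V) : ℕ :=
  (G.neighborSet v).ncard

/-- The pair `(G, H)` is dense: `G` is connected and `i ∉ H v → i+1 ∈ H v`. -/
def DensePair {V : Type*} (G : SimpleGraph V) (H : V → Set ℕ) : Prop :=
  G.Connected ∧ ∀ v : V, ∀ i : ℕ, i ∉ H v → i + 1 ∈ H v

/-- `D⁺_{G,H}(u)`: possible out-degrees of `u` over orientations feasible away from `u`. -/
noncomputable def Dset {V : Type*} (G : SimpleGraph V) (H : V → Set ℕ) (u : V) : Set ℕ :=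
  {d | ∃ O : GOrientation G, (∀ x, x ≠ u → outDeg O x ∈ H x) ∧ outDeg O u = d}

/-- `x` is a cut vertex: `G` is connected but `G - x` is not. -/
def IsCutVertex {V : Type*} (G : SimpleGraph V) (x : V) : Prop :=
  G.Connected ∧ ¬ (G.induce ({x}ᶜ : Set V)).Connected

/- ------------------------------------------------------------------ -/
/- Auxiliary development                                               -/
/- ------------------------------------------------------------------ -/

attribute [local instance] Classical.propDecidable

namespace Stmt12Aux

variable {V : Type*} [Fintype V] {G : SimpleGraph V}

/-- The finset of edges. -/
noncomputable def EF (G : SimpleGraph V) : Finset (Sym2 V) := G.edgeSet.toFinite.toFinset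

lemma mem_EF {e : Sym2 V} : e ∈ EF G ↔ e ∈ G.edgeSet := Set.Finite.mem_toFinset _

/-- Out-degree parity. -/
noncomputable def par (O : GOrientation G) (x : V) : ZMod 2 :=
  ∑ e ∈ EF G, if O.src e = x then 1 else 0

/-- Indicator function. -/
noncomputable def chi (a x : V) : ZMod 2 := if a = x then 1 else 0

lemma zmod2_add_self (t : ZMod 2) : t + t = 0 := by
  have h2 : (2 : ZMod 2) = 0 := by decide
  rw [← two_mul, h2, zero_mul]

lemma par_eq (O : GOrientation G) (v : V) : par O v = (outDeg O v : ZMod 2) := by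
  have hset : {e ∈ G.edgeSet | O.src e = v} =
      ↑((EF G).filter (fun e => O.src e = v)) := by
    rw [Finset.coe_filter]
    ext e
    simp only [Set.mem_setOf_eq, Finset.mem_coe, mem_EF]
  unfold par
  rw [Finset.sum_boole, outDeg, hset, Set.ncard_coe_finset]

lemma sum_par (O : GOrientation G) : ∑ x, par O x = ((EF G).card : ZMod 2) := by
  unfold par
  rw [Finset.sum_comm]
  have : ∀ e ∈ EF G, (∑ x : V, if O.src e = x then (1 : ZMod 2) else 0) = 1 := by
    intro e _
    simp
  rw [Finset.sum_congr rfl this]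
  simp

lemma flip_par (O : GOrientation G) {e0 : Sym2 V} (he : e0 ∈ G.edgeSet) :
    ∃ O' : GOrientation G, ∀ x, par O' x =
      par O x + chi (O.src e0) x + chi (Sym2.Mem.other (O.mem e0 he)) x := by
  refine ⟨⟨fun e => if e = e0 then Sym2.Mem.other (O.mem e0 he) else O.src e, ?_⟩, ?_⟩
  · intro e hee
    split
    · next h => rw [h]; exact Sym2.other_mem _
    · exact O.mem e hee
  · intro x
    have he0 : e0 ∈ EF G := mem_EF.2 he
    unfold par
    rw [← Finset.sum_erase_add _ _ he0, ← Finset.sum_erase_add _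
      (fun e => if O.src e = x then (1 : ZMod 2) else 0) he0]
    have hcongr : ∑ e ∈ (EF G).erase e0,
        (if (if e = e0 then Sym2.Mem.other (O.mem e0 he) else O.src e) = x then (1 : ZMod 2) else 0)
        = ∑ e ∈ (EF G).erase e0, (if O.src e = x then (1 : ZMod 2) else 0) := by
      refine Finset.sum_congr rfl fun e hee => ?_
      rw [if_neg (Finset.ne_of_mem_erase hee)]
    rw [hcongr]
    dsimp only
    have hifpos : (if e0 = e0 then Sym2.Mem.other (O.mem e0 he) else O.src e0)
        = Sym2.Mem.other (O.mem e0 he) := if_pos rfl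
    simp only [↓reduceIte]
    set S := ∑ e ∈ (EF G).erase e0, (if O.src e = x then (1 : ZMod 2) else 0)
    have h1 : (if Sym2.Mem.other (O.mem e0 he) = x then (1 : ZMod 2) else 0) =
        chi (Sym2.Mem.other (O.mem e0 he)) x := rfl
    have h2 : (if O.src e0 = x then (1 : ZMod 2) else 0) = chi (O.src e0) x := rfl
    rw [h1, h2]
    have := zmod2_add_self (chi (O.src e0) x)
    linear_combination -this

lemma walk_par {u w : V} (p : G.Walk u w) (O : GOrientation G) :
    ∃ O' : GOrientation G, ∀ x, par O' x = par O x + chi u x + chi w x := by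
  induction p generalizing O with
  | nil =>
    refine ⟨O, fun x => ?_⟩
    rw [add_assoc, zmod2_add_self, add_zero]
  | @cons u y w h p ih =>
    have he : s(u, y) ∈ G.edgeSet := h
    obtain ⟨O1, h1⟩ := flip_par O he
    obtain ⟨O', h2⟩ := ih O1
    refine ⟨O', fun x => ?_⟩
    have key : chi (O.src s(u, y)) x + chi (Sym2.Mem.other (O.mem _ he)) x
        = chi u x + chi y x := by
      have ha : O.src s(u, y) ∈ s(u, y) := O.mem _ he
      have hb : Sym2.Mem.other ha ∈ s(u, y) := Sym2.other_mem ha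
      have hne : Sym2.Mem.other ha ≠ O.src s(u, y) :=
        Sym2.other_ne (G.not_isDiag_of_mem_edgeSet he) ha
      rcases Sym2.mem_iff.1 ha with ha' | ha'
      · have hb' : Sym2.Mem.other ha = y := by
          rcases Sym2.mem_iff.1 hb with hb' | hb'
          · exact absurd (hb'.trans ha'.symm) hne
          · exact hb'
        have e1 : chi (O.src s(u, y)) x = chi u x := by rw [ha']
        have e2 : chi (Sym2.Mem.other ha) x = chi y x := by rw [hb']
        rw [e1, e2]
      · have hb' : Sym2.Mem.other ha = u := by
          rcases Sym2.mem_iff.1 hb with hb' | hb'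
          · exact hb'
          · exact absurd (hb'.trans ha'.symm) hne
        have e1 : chi (O.src s(u, y)) x = chi y x := by rw [ha']
        have e2 : chi (Sym2.Mem.other ha) x = chi u x := by rw [hb']
        rw [e1, e2, add_comm]
    have hself := zmod2_add_self (chi y x)
    have e1 := h2 x
    have e2 := h1 x
    linear_combination e1 + e2 + key + hself

lemma zmod2_ne_iff {a b : ZMod 2} (h : a ≠ b) : a = b + 1 := by
  have : ∀ a b : ZMod 2, a ≠ b → a = b + 1 := by decide
  exact this a b h

lemma fix_par (hG : G.Connected) (q : V → ZMod 2) :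
    ∀ n (O : GOrientation G), (∑ x, par O x = ∑ x, q x) →
      (Finset.univ.filter fun v => par O v ≠ q v).card ≤ n →
      ∃ O' : GOrientation G, ∀ v, par O' v = q v := by
  intro n
  induction n with
  | zero =>
    intro O _ hc
    refine ⟨O, fun v => ?_⟩
    by_contra hv
    have : v ∈ Finset.univ.filter fun v => par O v ≠ q v := by
      simp [hv]
    have := Finset.card_pos.2 ⟨v, this⟩
    omega
  | succ n ih =>
    intro O hs hc
    by_cases hex : ∃ u, par O u ≠ q u
    · obtain ⟨u, hu⟩ := hex
      set M := Finset.univ.filter fun v => par O v ≠ q v with hM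
      have huM : u ∈ M := by simp [hM, hu]
      have hcard0 : ((M.card : ZMod 2)) = 0 := by
        have hz : ∑ v : V, (par O v - q v) = 0 := by
          rw [Finset.sum_sub_distrib, hs, sub_self]
        have hterm : ∀ v : V, par O v - q v = if par O v ≠ q v then 1 else 0 := by
          intro v
          by_cases hv : par O v = q v
          · simp [hv]
          · rw [if_pos hv, zmod2_ne_iff hv]; ring
        calc (M.card : ZMod 2) = ∑ v : V, if par O v ≠ q v then 1 else 0 := by
              rw [Finset.sum_boole]
          _ = ∑ v : V, (par O v - q v) := by
              exact (Finset.sum_congr rfl fun v _ => (hterm v)).symm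
          _ = 0 := hz
      have hw : ∃ w, par O w ≠ q w ∧ w ≠ u := by
        by_contra hcon
        push_neg at hcon
        have hMu : M = {u} := by
          ext v
          simp only [hM, Finset.mem_filter, Finset.mem_univ, true_and, Finset.mem_singleton]
          constructor
          · intro hv
            by_contra hvu
            exact hvu (hcon v hv)
          · intro hv; subst hv; exact hu
        rw [hMu] at hcard0
        simp at hcard0
      obtain ⟨w, hwq, hwu⟩ := hw
      obtain ⟨p⟩ := hG.preconnected u w
      obtain ⟨O', hO'⟩ := walk_par p O
      have hwM : w ∈ M := by simp [hM, hwq]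
      have hsub : (Finset.univ.filter fun v => par O' v ≠ q v) ⊆ M.erase u := by
        intro v hv
        simp only [Finset.mem_filter, Finset.mem_univ, true_and] at hv
        rw [hO' v] at hv
        have h11 : (1 : ZMod 2) + 1 = 0 := by decide
        by_cases hvu : v = u
        · exfalso
          subst hvu
          have hcu : chi v v = 1 := if_pos rfl
          have hcw : chi w v = 0 := if_neg hwu
          rw [hcu, hcw, add_zero, zmod2_ne_iff hu] at hv
          exact hv (by linear_combination h11)
        · by_cases hvw : v = w
          · exfalso
            subst hvw
            have hcu : chi u v = 0 := if_neg (fun h => hwu h.symm)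
            have hcw : chi v v = 1 := if_pos rfl
            rw [hcu, add_zero, hcw, zmod2_ne_iff hwq] at hv
            exact hv (by linear_combination h11)
          · have hcu : chi u v = 0 := if_neg (fun h => hvu h.symm)
            have hcw : chi w v = 0 := if_neg (fun h => hvw h.symm)
            rw [hcu, hcw, add_zero, add_zero] at hv
            exact Finset.mem_erase.2 ⟨hvu, by simp [hM, hv]⟩
      apply ih O'
      · have hchi : ∀ a : V, ∑ x : V, chi a x = 1 := by
          intro a
          unfold chi
          rw [Finset.sum_ite_eq Finset.univ a (fun _ => (1 : ZMod 2))]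
          simp
        calc ∑ x, par O' x = ∑ x, (par O x + chi u x + chi w x) := by
              exact Finset.sum_congr rfl fun x _ => hO' x
          _ = (∑ x, par O x) + (∑ x, chi u x) + (∑ x, chi w x) := by
              rw [Finset.sum_add_distrib, Finset.sum_add_distrib]
          _ = ∑ x, q x := by
              rw [hs, hchi, hchi]
              have := zmod2_add_self (1 : ZMod 2)
              linear_combination this
      · have h1 : (Finset.univ.filter fun v => par O' v ≠ q v).card ≤ (M.erase u).card :=
          Finset.card_le_card hsub
        have h2 : (M.erase u).card = M.card - 1 := Finset.card_erase_of_mem huM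
        have h3 : 1 ≤ M.card := Finset.card_pos.2 ⟨u, huM⟩
        omega
    · push_neg at hex
      exact ⟨O, hex⟩

lemma outDeg_le_deg (O : GOrientation G) (v : V) : outDeg O v ≤ deg G v := by
  classical
  have hsub : {e ∈ G.edgeSet | O.src e = v} ⊆ G.incidenceSet v := by
    rintro e ⟨he, hsrc⟩
    exact ⟨he, hsrc ▸ O.mem e he⟩
  have h1 : outDeg O v ≤ (G.incidenceSet v).ncard :=
    Set.ncard_le_ncard hsub (Set.toFinite _)
  have h2 : (G.incidenceSet v).ncard = (G.neighborSet v).ncard := by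
    rw [Set.ncard_eq_toFinset_card', Set.ncard_eq_toFinset_card']
    rw [Set.toFinset_card, Set.toFinset_card]
    exact Fintype.card_congr (G.incidenceSetEquivNeighborSet v)
  exact h1.trans (le_of_eq h2)

end Stmt12Aux

open Stmt12Aux in
theorem stmt12 {V : Type*} [Fintype V] (G : SimpleGraph V) (H : V → Set ℕ)
    (hG : G.Connected)
    (hH : ∀ v : V, H v = {i | i ≤ 2 * ((deg G v + 1) / 2) ∧ Even i} ∨
                   H v = {i | 1 ≤ i ∧ i ≤ 2 * ((deg G v + 1) / 2) - 1 ∧ Odd i})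
    (hpar : {v : V | ∀ n ∈ H v, Odd n}.ncard % 2 = G.edgeSet.ncard % 2) :
    ∃ O : GOrientation G, ∀ v, outDeg O v ∈ H v := by
  classical
  set q : V → ZMod 2 := fun v => if ∀ n ∈ H v, Odd n then 1 else 0 with hq
  -- a base orientation
  let O0 : GOrientation G := ⟨fun e => (Quot.out e).1, fun e _ => Sym2.out_fst_mem e⟩
  have hsumq : ∑ x, q x = (({v : V | ∀ n ∈ H v, Odd n}.ncard : ℕ) : ZMod 2) := by
    have hset : {v : V | ∀ n ∈ H v, Odd n} =
        ↑(Finset.univ.filter fun v : V => ∀ n ∈ H v, Odd n) := by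
      ext v; simp
    rw [hset, Set.ncard_coe_finset, ← Finset.sum_boole]
  have hE : (EF G).card = G.edgeSet.ncard := by
    rw [Set.ncard_eq_toFinset_card _ G.edgeSet.toFinite]
    rfl
  have hsum : ∑ x, par O0 x = ∑ x, q x := by
    rw [sum_par, hsumq, hE]
    have h1 : ((G.edgeSet.ncard : ℕ) : ZMod 2) = ((G.edgeSet.ncard % 2 : ℕ) : ZMod 2) :=
      (ZMod.natCast_mod _ 2).symm
    have h2 : (({v : V | ∀ n ∈ H v, Odd n}.ncard : ℕ) : ZMod 2)
        = (({v : V | ∀ n ∈ H v, Odd n}.ncard % 2 : ℕ) : ZMod 2) :=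
      (ZMod.natCast_mod _ 2).symm
    rw [h1, h2, hpar]
  obtain ⟨O', hO'⟩ := fix_par hG q _ O0 hsum le_rfl
  refine ⟨O', fun v => ?_⟩
  have hpart : ((outDeg O' v : ℕ) : ZMod 2) = q v := by
    rw [← par_eq]; exact hO' v
  have hle : outDeg O' v ≤ deg G v := outDeg_le_deg O' v
  rcases hH v with h | h
  · -- even type
    have hq0 : q v = 0 := by
      rw [hq]
      simp only
      rw [if_neg]
      intro hodd
      have h0 : (0 : ℕ) ∈ H v := by
        rw [h]; exact ⟨Nat.zero_le _, Even.zero⟩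
      have := hodd 0 h0
      simp [Nat.odd_iff] at this
    rw [hq0] at hpart
    have heven : 2 ∣ outDeg O' v := (ZMod.natCast_eq_zero_iff _ 2).1 hpart
    rw [h]
    refine ⟨?_, (even_iff_two_dvd).2 heven⟩
    omega
  · -- odd type
    have hq1 : q v = 1 := by
      rw [hq]
      simp only
      rw [if_pos]
      intro n hn
      rw [h] at hn
      exact hn.2.2
    rw [hq1] at hpart
    have hodd : outDeg O' v % 2 = 1 := by
      rcases Nat.mod_two_eq_zero_or_one (outDeg O' v) with h0 | h1
      · exfalso
        have : 2 ∣ outDeg O' v := Nat.dvd_of_mod_eq_zero h0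
        have := (ZMod.natCast_eq_zero_iff (outDeg O' v) 2).2 this
        rw [hpart] at this
        exact one_ne_zero this
      · exact h1
    rw [h]
    refine ⟨by omega, by omega, Nat.odd_iff.2 hodd⟩
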